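/- In the order O_f of conductor f in an imaginary quadratic field, every nonzero O_f-ideal prime to f factors uniquely (up to order) into a product of prime O_f-ideals, each of which is also prime to f. -/

import Mathlib

open NumberField

set_option maxHeartbeats 2000000 in

/-- In the order `O_f = ℤ + f·O_K` of conductor `f` in an imaginary quadratic field,
every nonzero `O_f`-ideal prime to `f` factors uniquely (as a multiset) into prime
`O_f`-ideals, each of which is also prime to `f`. -/
theorem stmt_14 (K : Type*) [Field K] [NumberField K]
    (h2 : Module.finrank ℚ K = 2) (him : IsEmpty (K →+* ℝ))
    (f : ℕ) (hf : 0 < f) (Of : Subring (𝓞 K))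
    (hOf : ∀ x : 𝓞 K, x ∈ Of ↔ ∃ (m : ℤ) (y : 𝓞 K), x = m + f * y)
    (a : Ideal Of) (ha : a ≠ ⊥) (haf : a ⊔ Ideal.span {(f : Of)} = ⊤) :
    ∃! s : Multiset (Ideal Of),
      (∀ P ∈ s, P.IsPrime ∧ P ⊔ Ideal.span {(f : Of)} = ⊤) ∧ s.prod = a := by
  classical
  have hfK : (f : 𝓞 K) ≠ 0 := Nat.cast_ne_zero.mpr hf.ne'
  have hcoe : ((f : Of) : 𝓞 K) = (f : 𝓞 K) := by push_cast; ring
  have hf0 : (f : Of) ≠ 0 := by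
    intro h
    apply hfK
    rw [← hcoe, h]; rfl
  haveI : Algebra.IsIntegral ℤ Of := by
    constructor
    intro x
    have h1 : IsIntegral ℤ (algebraMap Of (𝓞 K) x) := (algebraMap Of (𝓞 K) x).isIntegral
    have hinj : Function.Injective (algebraMap Of (𝓞 K)) := fun a b h => Subtype.val_injective h
    exact IsIntegral.tower_bot (R := ℤ) (A := ↥Of) (B := 𝓞 K) hinj h1
  set D := Localization.Away (f : 𝓞 K) with hD
  letI : Algebra Of D := ((algebraMap (𝓞 K) D).comp Of.subtype).toAlgebra
  have halg : ∀ x : Of, algebraMap Of D x = algebraMap (𝓞 K) D (x : 𝓞 K) := fun x => rfl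
  set M : Submonoid Of := Submonoid.powers (f : Of) with hM
  haveI : IsLocalization M D := by
    constructor
    constructor
    · rintro ⟨x, n, rfl⟩
      simp only [halg]
      have : (((f : Of) ^ n : Of) : 𝓞 K) = ((f : 𝓞 K) ^ n) := by rw [← hcoe]; push_cast; ring
      rw [this, map_pow]
      exact IsUnit.pow n (IsLocalization.Away.algebraMap_isUnit (f : 𝓞 K))
    · intro z
      obtain ⟨⟨x, s⟩, h⟩ := IsLocalization.surj (Submonoid.powers ((f : 𝓞 K))) z
      obtain ⟨n, hn⟩ := s.2
      have hmem : (f : 𝓞 K) * x ∈ Of := by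
        rw [hOf]; exact ⟨0, x, by push_cast; ring⟩
      refine ⟨⟨⟨(f : 𝓞 K) * x, hmem⟩, ⟨(f : Of) ^ (n + 1), ⟨n + 1, rfl⟩⟩⟩, ?_⟩
      simp only [halg]
      have h2 : (((f : Of) ^ (n+1) : Of) : 𝓞 K) = ((f : 𝓞 K) ^ (n+1)) := by
        rw [← hcoe]; push_cast; ring
      rw [h2]
      have hn' : ((f : 𝓞 K)) ^ n = (s : 𝓞 K) := hn
      rw [pow_succ, map_mul, ← mul_assoc, hn']
      rw [h, ← map_mul, mul_comm]
    · intro x y hxy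
      simp only [halg] at hxy
      obtain ⟨c, hc⟩ := IsLocalization.exists_of_eq (M := Submonoid.powers ((f : 𝓞 K))) hxy
      obtain ⟨n, hn⟩ := c.2
      have hcne : (c : 𝓞 K) ≠ 0 := by
        rw [← hn]; exact pow_ne_zero _ hfK
      have : (x : 𝓞 K) = (y : 𝓞 K) := mul_left_cancel₀ hcne hc
      exact ⟨1, by ext : 1; simpa using this⟩
  have hMK : Submonoid.powers ((f : 𝓞 K)) ≤ nonZeroDivisors (𝓞 K) := by
    rintro x ⟨n, rfl⟩
    exact mem_nonZeroDivisors_of_ne_zero (pow_ne_zero _ hfK)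
  haveI : IsDomain D := IsLocalization.isDomain_localization hMK
  haveI : IsDedekindDomain D := IsLocalization.isDedekindDomain (𝓞 K) hMK D
  have hM0 : M ≤ nonZeroDivisors Of := by
    rintro x ⟨n, rfl⟩
    exact mem_nonZeroDivisors_of_ne_zero (pow_ne_zero _ hf0)
  have hInj : Function.Injective (algebraMap Of D) := IsLocalization.injective D hM0
  -- ideals prime to f are saturated
  have hsat : ∀ b : Ideal Of, b ⊔ Ideal.span {(f : Of)} = ⊤ →
      ∀ x : Of, (f : Of) * x ∈ b → x ∈ b := by
    intro b hb x hx
    have h1 : (1 : Of) ∈ b ⊔ Ideal.span {(f : Of)} := hb ▸ Submodule.mem_top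
    obtain ⟨y, hy, z, hz, hyz⟩ := Submodule.mem_sup.mp h1
    obtain ⟨c, hc⟩ := Ideal.mem_span_singleton'.mp hz
    have hx' : x = x * y + c * ((f : Of) * x) := by
      have h2 : x * y + c * ((f : Of) * x) = x * (y + z) := by rw [← hc]; ring
      rw [h2, hyz, mul_one]
    rw [hx']
    exact add_mem (Ideal.mul_mem_left _ _ hy) (Ideal.mul_mem_left _ _ hx)
  have hpow : ∀ b : Ideal Of, b ⊔ Ideal.span {(f : Of)} = ⊤ →
      ∀ (n : ℕ) (x : Of), (f : Of) ^ n * x ∈ b → x ∈ b := by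
    intro b hb n
    induction n with
    | zero => intro x hx; simpa using hx
    | succ n ih =>
      intro x hx
      apply ih
      apply hsat b hb
      have : (f : Of) * ((f : Of) ^ n * x) = (f : Of) ^ (n + 1) * x := by ring
      rw [this]; exact hx
  -- comap ∘ map = id on ideals prime to f
  have hcm : ∀ b : Ideal Of, b ⊔ Ideal.span {(f : Of)} = ⊤ →
      Ideal.comap (algebraMap Of D) (Ideal.map (algebraMap Of D) b) = b := by
    intro b hb
    refine le_antisymm ?_ Ideal.le_comap_map
    intro x hx
    rw [Ideal.mem_comap] at hx
    obtain ⟨⟨⟨y, hy⟩, s⟩, hs⟩ := (IsLocalization.mem_map_algebraMap_iff M D).mp hx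
    have hs' : algebraMap Of D (x * s) = algebraMap Of D y := by
      rw [map_mul]; exact hs
    obtain ⟨c, hc⟩ := IsLocalization.exists_of_eq (M := M) (S := D) hs'
    obtain ⟨m, hm⟩ := c.2
    obtain ⟨n, hn⟩ := s.2
    have hmem : (f : Of) ^ (m + n) * x ∈ b := by
      have : (f : Of) ^ (m + n) * x = (c : Of) * (x * (s : Of)) := by
        rw [← hm, ← hn]; ring
      rw [this, hc]
      exact Ideal.mul_mem_left _ _ hy
    exact hpow b hb _ x hmem
  -- factor the extension of a in the Dedekind domain D
  set F : Ideal Of → Ideal D := Ideal.map (algebraMap Of D) with hF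
  have hA0 : F a ≠ ⊥ := by
    intro h
    exact ha ((Ideal.map_eq_bot_iff_of_injective hInj).mp h)
  obtain ⟨T, hT, hTprod⟩ := UniqueFactorizationMonoid.exists_prime_factors (F a) hA0
  have hTA : T.prod = F a := associated_iff_eq.mp hTprod
  -- properties of the contractions of the factors
  have key : ∀ Q ∈ T, (Ideal.comap (algebraMap Of D) Q).IsPrime ∧
      (Ideal.comap (algebraMap Of D) Q) ⊔ Ideal.span {(f : Of)} = ⊤ := by
    intro Q hQT
    have hQ : Prime Q := hT Q hQT
    haveI hQp : Q.IsPrime := Ideal.isPrime_of_prime hQ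
    set P := Ideal.comap (algebraMap Of D) Q with hP
    haveI hPp : P.IsPrime := Ideal.IsPrime.comap (algebraMap Of D)
    have hfu : IsUnit (algebraMap Of D (f : Of)) :=
      IsLocalization.map_units D (⟨(f : Of), 1, pow_one _⟩ : M)
    have hfP : (f : Of) ∉ P := by
      intro hfP
      exact hQp.ne_top (Ideal.eq_top_of_isUnit_mem Q (Ideal.mem_comap.mp hfP) hfu)
    have hP0 : P ≠ ⊥ := by
      intro h
      apply hQ.ne_zero
      rw [Ideal.zero_eq_bot, ← IsLocalization.map_comap M D Q, Ideal.under_def, ← hP, h, Ideal.map_bot]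
    have hp0 : Ideal.comap (algebraMap ℤ Of) P ≠ ⊥ := by
      intro h
      exact hP0 (Ideal.eq_bot_of_comap_eq_bot h)
    haveI : (Ideal.comap (algebraMap ℤ Of) P).IsPrime := Ideal.IsPrime.comap (algebraMap ℤ Of)
    have hpmax : (Ideal.comap (algebraMap ℤ Of) P).IsMaximal :=
      IsPrime.to_maximal_ideal hp0
    have hPmax : P.IsMaximal := Ideal.isMaximal_of_isIntegral_of_isMaximal_comap P hpmax
    refine ⟨hPp, ?_⟩
    by_contra hne
    have heq := hPmax.eq_of_le hne le_sup_left
    apply hfP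
    rw [heq]
    exact Ideal.mem_sup_right (Ideal.mem_span_singleton_self _)
  -- the candidate multiset
  set s : Multiset (Ideal Of) := T.map (Ideal.comap (algebraMap Of D)) with hs
  have hs1 : ∀ P ∈ s, P.IsPrime ∧ P ⊔ Ideal.span {(f : Of)} = ⊤ := by
    intro P hP
    obtain ⟨Q, hQT, rfl⟩ := Multiset.mem_map.mp hP
    exact key Q hQT
  have hmaps : s.map F = T := by
    rw [hs, Multiset.map_map]
    calc T.map (F ∘ Ideal.comap (algebraMap Of D))
        = T.map id := Multiset.map_congr rfl fun Q _ => IsLocalization.map_comap M D Q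
      _ = T := Multiset.map_id T
  have hFprod : ∀ t : Multiset (Ideal Of), F t.prod = (t.map F).prod := by
    intro t
    exact map_multiset_prod (Ideal.mapHom (algebraMap Of D)) t
  have hssup : s.prod ⊔ Ideal.span {(f : Of)} = ⊤ := by
    rw [sup_comm]
    exact Ideal.sup_multiset_prod_eq_top fun P hP => by rw [sup_comm]; exact (hs1 P hP).2
  have hsprod : s.prod = a := by
    have h1 : F s.prod = F a := by rw [hFprod, hmaps, hTA]
    calc s.prod = Ideal.comap (algebraMap Of D) (F s.prod) := (hcm _ hssup).symm
      _ = Ideal.comap (algebraMap Of D) (F a) := by rw [h1]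
      _ = a := hcm a haf
  refine ⟨s, ⟨hs1, hsprod⟩, ?_⟩
  -- uniqueness
  rintro s' ⟨hs'1, hs'2⟩
  have hbot : ∀ P' ∈ s', P' ≠ ⊥ := by
    intro P' hP' hb
    apply ha
    rw [← hs'2]
    rw [Ideal.multiset_prod_eq_bot]
    exact hb ▸ hP'
  have hFprime : ∀ Q ∈ s'.map F, Prime Q := by
    intro Q hQ
    obtain ⟨P', hP', rfl⟩ := Multiset.mem_map.mp hQ
    obtain ⟨hP'p, hP'sup⟩ := hs'1 P' hP'
    have hdisj : Disjoint (M : Set Of) (P' : Set Of) := by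
      rw [Set.disjoint_left]
      rintro x ⟨n, rfl⟩ hxP
      have hfP : (f : Of) ∈ P' := hP'p.mem_of_pow_mem n hxP
      apply hP'p.ne_top
      rw [← hP'sup]
      rw [sup_eq_left.mpr (Ideal.span_le.mpr (by simpa using hfP))]
    have hprime : (F P').IsPrime := IsLocalization.isPrime_of_isPrime_disjoint M D P' hP'p hdisj
    have hne : F P' ≠ ⊥ := by
      intro h
      exact hbot P' hP' ((Ideal.map_eq_bot_iff_of_injective hInj).mp h)
    exact Ideal.prime_of_isPrime hne hprime
  have hassoc : Associated (s'.map F).prod T.prod := by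
    rw [← hFprod, hs'2, hTA]
  have hrel : Multiset.Rel Associated (s'.map F) T :=
    prime_factors_unique hFprime hT hassoc
  have heqT : s'.map F = T := by
    rw [← Multiset.rel_eq]
    exact Multiset.Rel.mono hrel fun a _ b _ h => associated_iff_eq.mp h
  calc s' = s'.map id := (Multiset.map_id s').symm
    _ = s'.map (Ideal.comap (algebraMap Of D) ∘ F) := by
        refine Multiset.map_congr rfl fun P' hP' => ?_
        exact (hcm P' (hs'1 P' hP').2).symm
    _ = (s'.map F).map (Ideal.comap (algebraMap Of D)) := by rw [Multiset.map_map]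
    _ = s := by rw [heqT, hs]
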